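/- Duality bound for low-degree correlation (Proposition 3.1): Let Y be a random vector in ℝ^N measurable with respect to a pair of random elements (W, θ), and let x be a square-integrable real random variable with E[x²] > 0, all on a common probability space. Let (φ_α(Y))_{α ∈ 𝒢} be a family of polynomial functions of Y that spans the space ℝ_D[Y] of all polynomials of degree at most D in the entries of Y, and let (ψ_p(W,θ))_{p ∈ 𝒫} be an orthonormal family in L² (E[ψ_p ψ_{p'}] = 1 if p = p' and 0 otherwise). Define c = (c_α)_{α ∈ 𝒢} with c_α = E[φ_α(Y)·x] and M = (M_{p,α}) with M_{p,α} = E[φ_α(Y)·ψ_p(W,θ)]. Then Corr_{≤D} ≤ (1/√(E[x²])) · inf{ ‖u‖_{ℓ²(𝒫)} : u ∈ ℓ²(𝒫) with Σ_{p} M_{p,α} u_p = c_α for all α ∈ 𝒢 } (with the convention that the infimum is +∞ if no such u exists). Moreover, if every element of ℝ_D[Y] lies in the closed linear span of (ψ_p)_{p ∈ 𝒫}, then this inequality is an equality. -/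

import Mathlib

open MeasureTheory ProbabilityTheory Filter

/-- The degree-D maximum correlation: the supremum, over real multivariate polynomials
f of degree at most D in the entries of Y, of E[f(Y)·x]/√(E[f(Y)²]·E[x²]). -/
noncomputable def Corr {Ω : Type*} [MeasurableSpace Ω] (μ : Measure Ω)
    {ι : Type*} [Fintype ι] (Y : Ω → ι → ℝ) (x : Ω → ℝ) (D : ℕ) : ℝ :=
  sSup {t : ℝ | ∃ f : MvPolynomial ι ℝ, f.totalDegree ≤ D ∧
    t = (∫ ω, MvPolynomial.eval (Y ω) f * x ω ∂μ) /
        Real.sqrt ((∫ ω, (MvPolynomial.eval (Y ω) f) ^ 2 ∂μ) * (∫ ω, (x ω) ^ 2 ∂μ))}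

open RealInnerProductSpace

/-- Cauchy–Schwarz for a HasSum of products of square-summable families. -/
lemma tsum_abs_cs {P : Type*} {a b : P → ℝ} (ha : Summable fun p => a p ^ 2)
    (hb : Summable fun p => b p ^ 2) {s : ℝ} (h : HasSum (fun p => a p * b p) s) :
    |s| ≤ Real.sqrt (∑' p, a p ^ 2) * Real.sqrt (∑' p, b p ^ 2) := by
  have hkey : ∀ t : Finset P, |∑ p ∈ t, a p * b p| ≤
      Real.sqrt (∑' p, a p ^ 2) * Real.sqrt (∑' p, b p ^ 2) := by
    intro t
    have h1 : (∑ p ∈ t, a p * b p) ^ 2 ≤ (∑ p ∈ t, a p ^ 2) * ∑ p ∈ t, b p ^ 2 :=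
      Finset.sum_mul_sq_le_sq_mul_sq t a b
    have h2 : (∑ p ∈ t, a p ^ 2) ≤ ∑' p, a p ^ 2 :=
      Summable.sum_le_tsum t (fun _ _ => sq_nonneg _) ha
    have h3 : (∑ p ∈ t, b p ^ 2) ≤ ∑' p, b p ^ 2 :=
      Summable.sum_le_tsum t (fun _ _ => sq_nonneg _) hb
    have h4 : (∑ p ∈ t, a p * b p) ^ 2 ≤ (∑' p, a p ^ 2) * ∑' p, b p ^ 2 :=
      h1.trans (mul_le_mul h2 h3 (Finset.sum_nonneg fun _ _ => sq_nonneg _)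
        (tsum_nonneg fun _ => sq_nonneg _))
    calc |∑ p ∈ t, a p * b p| = Real.sqrt ((∑ p ∈ t, a p * b p) ^ 2) :=
          (Real.sqrt_sq_eq_abs _).symm
      _ ≤ Real.sqrt ((∑' p, a p ^ 2) * ∑' p, b p ^ 2) := Real.sqrt_le_sqrt h4
      _ = _ := Real.sqrt_mul (tsum_nonneg fun _ => sq_nonneg _) _
  exact le_of_tendsto' ((continuous_abs.tendsto s).comp h) hkey

/-- Parseval-type identity for elements of the closed span of an orthonormal family. -/
lemma hasSum_inner_of_mem_closure {P H : Type*} [NormedAddCommGroup H]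
    [InnerProductSpace ℝ H] [CompleteSpace H]
    {Ψ : P → H} (hon : Orthonormal ℝ Ψ) {a y : H}
    (ha : a ∈ closure ((Submodule.span ℝ (Set.range Ψ) : Submodule ℝ H) : Set H))
    (hy : y ∈ closure ((Submodule.span ℝ (Set.range Ψ) : Submodule ℝ H) : Set H)) :
    HasSum (fun p => ⟪a, Ψ p⟫ * ⟪Ψ p, y⟫) ⟪a, y⟫ := by
  set K : Submodule ℝ H := (Submodule.span ℝ (Set.range Ψ)).topologicalClosure with hK
  have hcoe : (K : Set H) = closure ((Submodule.span ℝ (Set.range Ψ) : Submodule ℝ H) : Set H) :=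
    Submodule.topologicalClosure_coe _
  have hmem : ∀ p, Ψ p ∈ K := fun p =>
    Submodule.le_topologicalClosure _ (Submodule.subset_span ⟨p, rfl⟩)
  have haK : a ∈ K := by rw [← SetLike.mem_coe, hcoe]; exact ha
  have hyK : y ∈ K := by rw [← SetLike.mem_coe, hcoe]; exact hy
  haveI : CompleteSpace K := (Submodule.isClosed_topologicalClosure _).completeSpace_coe
  set Ψ' : P → K := fun p => ⟨Ψ p, hmem p⟩ with hΨ'
  have hon' : Orthonormal ℝ Ψ' := by
    classical
    rw [orthonormal_iff_ite] at hon ⊢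
    intro i j
    rw [Submodule.coe_inner]
    exact hon i j
  have hdense : ⊤ ≤ (Submodule.span ℝ (Set.range Ψ')).topologicalClosure := by
    intro z _
    rw [← SetLike.mem_coe, Submodule.topologicalClosure_coe, closure_subtype]
    have himg : (Subtype.val '' ((Submodule.span ℝ (Set.range Ψ') : Submodule ℝ K) : Set K)) =
        ((Submodule.span ℝ (Set.range Ψ) : Submodule ℝ H) : Set H) := by
      have : Submodule.map K.subtype (Submodule.span ℝ (Set.range Ψ')) =
          Submodule.span ℝ (Set.range Ψ) := by
        rw [Submodule.map_span]
        congr 1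
        rw [← Set.range_comp]
        rfl
      rw [← this, Submodule.map_coe, Submodule.coe_subtype]
    rw [himg, ← hcoe]
    exact z.2
  classical
  let b : HilbertBasis P ℝ K := HilbertBasis.mk hon' hdense
  have hb : ∀ p, (b p : H) = Ψ p := by
    intro p
    rw [show ⇑b = Ψ' from HilbertBasis.coe_mk hon' hdense]
  have := b.hasSum_inner_mul_inner ⟨a, haK⟩ ⟨y, hyK⟩
  simp only [Submodule.coe_inner, hb] at this
  exact this

set_option maxHeartbeats 1000000 in
set_option synthInstance.maxHeartbeats 400000 in
/-- Proposition 3.1 (duality bound for the low-degree correlation).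
Y = g(Z) is a random vector in ℝ^N measurable with respect to Z = (W,θ); x is square
integrable with E[x²] > 0; the polynomials (φ_α)_{α ∈ G} have degree ≤ D and the random
variables φ_α(Y) span ℝ_D[Y]; (ψ_p(Z))_{p ∈ P} is orthonormal in L².  With
c_α = E[φ_α(Y)x] and M_{p,α} = E[φ_α(Y)ψ_p(Z)]:
(i) for every u ∈ ℓ²(P) with Mᵀu = c one has Corr_{≤D} ≤ ‖u‖/√(E[x²])
    (i.e. Corr_{≤D} ≤ inf‖u‖/√(E[x²]), with the convention inf ∅ = +∞), and
(ii) if ℝ_D[Y] is contained in the closed linear span of the ψ_p in L², the inequality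
    is an equality. -/
theorem duality_bound
    {Ω γ : Type*} [MeasurableSpace Ω] [MeasurableSpace γ]
    (μ : Measure Ω) [IsProbabilityMeasure μ]
    (N D : ℕ) (Z : Ω → γ) (hZ : Measurable Z)
    (g : γ → Fin N → ℝ) (hg : Measurable g)
    (x : Ω → ℝ) (hx : MemLp x 2 μ) (hx2 : 0 < ∫ ω, x ω ^ 2 ∂μ)
    {G P : Type*} [DecidableEq P] (φ : G → MvPolynomial (Fin N) ℝ)
    (hφdeg : ∀ α, (φ α).totalDegree ≤ D)
    (hspan : ∀ f : MvPolynomial (Fin N) ℝ, f.totalDegree ≤ D →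
      (fun ω => MvPolynomial.eval (g (Z ω)) f) ∈
        Submodule.span ℝ
          (Set.range fun α => fun ω => MvPolynomial.eval (g (Z ω)) (φ α)))
    (ψ : P → γ → ℝ) (hψL2 : ∀ p, MemLp (fun ω => ψ p (Z ω)) 2 μ)
    (hON : ∀ p q : P,
      (∫ ω, ψ p (Z ω) * ψ q (Z ω) ∂μ) = if p = q then 1 else 0)
    (hfL2 : ∀ f : MvPolynomial (Fin N) ℝ, f.totalDegree ≤ D →
      MemLp (fun ω => MvPolynomial.eval (g (Z ω)) f) 2 μ)
    (c : G → ℝ) (hc : ∀ α, c α = ∫ ω, MvPolynomial.eval (g (Z ω)) (φ α) * x ω ∂μ)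
    (M : P → G → ℝ)
    (hM : ∀ p α, M p α = ∫ ω, MvPolynomial.eval (g (Z ω)) (φ α) * ψ p (Z ω) ∂μ) :
    (∀ u : P → ℝ, Summable (fun p => (u p) ^ 2) →
      (∀ α, HasSum (fun p => M p α * u p) (c α)) →
      Corr μ (fun ω => g (Z ω)) x D ≤
        Real.sqrt (∑' p, (u p) ^ 2) / Real.sqrt (∫ ω, x ω ^ 2 ∂μ)) ∧
    ((∀ (f : MvPolynomial (Fin N) ℝ) (hdf : f.totalDegree ≤ D),
        (hfL2 f hdf).toLp _ ∈
          closure (↑(Submodule.span ℝ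
            (Set.range fun p => ((hψL2 p).toLp _ : Lp ℝ 2 μ))) : Set (Lp ℝ 2 μ))) →
      Corr μ (fun ω => g (Z ω)) x D =
        sInf {t : ℝ | ∃ u : P → ℝ, Summable (fun p => (u p) ^ 2) ∧
            (∀ α, HasSum (fun p => M p α * u p) (c α)) ∧
            t = Real.sqrt (∑' p, (u p) ^ 2)} /
          Real.sqrt (∫ ω, x ω ^ 2 ∂μ)) := by
  classical
  have hs2 : 0 < Real.sqrt (∫ ω, x ω ^ 2 ∂μ) := Real.sqrt_pos.2 hx2
  -- the basic dictionary between integrals and L² inner products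
  have innerL2 : ∀ (f h : Ω → ℝ) (hf : MemLp f 2 μ) (hh : MemLp h 2 μ),
      ⟪hf.toLp f, hh.toLp h⟫ = ∫ ω, f ω * h ω ∂μ := by
    intro f h hf hh
    rw [MeasureTheory.L2.inner_def]
    refine integral_congr_ae ?_
    filter_upwards [hf.coeFn_toLp, hh.coeFn_toLp] with ω h1 h2
    rw [h1, h2]
    simp [RCLike.inner_apply, mul_comm]
  have hONfam : Orthonormal ℝ (fun p : P => ((hψL2 p).toLp _ : Lp ℝ 2 μ)) := by
    rw [orthonormal_iff_ite]
    intro p q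
    rw [innerL2]
    exact hON p q
  have hΦX : ∀ α : G, ⟪(hfL2 (φ α) (hφdeg α)).toLp _, hx.toLp x⟫ = c α := by
    intro α
    rw [innerL2]
    exact (hc α).symm
  have hΦΨ : ∀ (α : G) (p : P),
      ⟪(hfL2 (φ α) (hφdeg α)).toLp _, ((hψL2 p).toLp _ : Lp ℝ 2 μ)⟫ = M p α := by
    intro α p
    rw [innerL2]
    exact (hM p α).symm
  -- membership of the Lp classes of degree ≤ D polynomials in the span of the Φ's
  have hmemV : ∀ (f : MvPolynomial (Fin N) ℝ) (hdf : f.totalDegree ≤ D),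
      (hfL2 f hdf).toLp _ ∈ Submodule.span ℝ
        (Set.range fun α => ((hfL2 (φ α) (hφdeg α)).toLp _ : Lp ℝ 2 μ)) := by
    intro f hdf
    have key : ∀ v, v ∈ Submodule.span ℝ
        (Set.range fun α => fun ω => MvPolynomial.eval (g (Z ω)) (φ α)) →
        ∃ hvL : MemLp v 2 μ, hvL.toLp v ∈ Submodule.span ℝ
          (Set.range fun α => ((hfL2 (φ α) (hφdeg α)).toLp _ : Lp ℝ 2 μ)) := by
      intro v hv
      induction hv using Submodule.span_induction with
      | mem w hw =>
        obtain ⟨α, rfl⟩ := hw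
        exact ⟨hfL2 (φ α) (hφdeg α), Submodule.subset_span ⟨α, rfl⟩⟩
      | zero => exact ⟨MemLp.zero, by rw [MemLp.toLp_zero]; exact Submodule.zero_mem _⟩
      | add a b ha hb iha ihb =>
        obtain ⟨ha1, ha2⟩ := iha
        obtain ⟨hb1, hb2⟩ := ihb
        exact ⟨ha1.add hb1, by rw [MemLp.toLp_add ha1 hb1]; exact Submodule.add_mem _ ha2 hb2⟩
      | smul r v hv ih =>
        obtain ⟨h1, h2⟩ := ih
        exact ⟨h1.const_smul r, by rw [MemLp.toLp_const_smul r h1]; exact Submodule.smul_mem _ _ h2⟩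
    obtain ⟨hvL, hmem⟩ := key _ (hspan f hdf)
    exact hmem
  -- norm of the Lp class of a polynomial
  have hnorm : ∀ (f : MvPolynomial (Fin N) ℝ) (hdf : f.totalDegree ≤ D),
      ‖((hfL2 f hdf).toLp _ : Lp ℝ 2 μ)‖ ^ 2 = ∫ ω, (MvPolynomial.eval (g (Z ω)) f) ^ 2 ∂μ := by
    intro f hdf
    rw [← real_inner_self_eq_norm_sq, innerL2]
    exact integral_congr_ae (Eventually.of_forall fun ω => (pow_two _).symm)
  -- a generic upper bound on elements of the Corr set
  have hupper : ∀ C : ℝ, 0 ≤ C →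
      (∀ (f : MvPolynomial (Fin N) ℝ) (hdf : f.totalDegree ≤ D),
        |⟪(hfL2 f hdf).toLp _, hx.toLp x⟫| ≤ ‖((hfL2 f hdf).toLp _ : Lp ℝ 2 μ)‖ * C) →
      ∀ t ∈ {t : ℝ | ∃ f : MvPolynomial (Fin N) ℝ, f.totalDegree ≤ D ∧
        t = (∫ ω, MvPolynomial.eval (g (Z ω)) f * x ω ∂μ) /
          Real.sqrt ((∫ ω, (MvPolynomial.eval (g (Z ω)) f) ^ 2 ∂μ) * (∫ ω, (x ω) ^ 2 ∂μ))},
        t ≤ C / Real.sqrt (∫ ω, x ω ^ 2 ∂μ) := by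
    intro C hC hbd t ht
    obtain ⟨f, hdf, rfl⟩ := ht
    have hiX : (∫ ω, MvPolynomial.eval (g (Z ω)) f * x ω ∂μ)
        = ⟪(hfL2 f hdf).toLp _, hx.toLp x⟫ := (innerL2 _ _ _ _).symm
    rw [hiX, ← hnorm f hdf, Real.sqrt_mul (sq_nonneg _), Real.sqrt_sq (norm_nonneg _)]
    rcases eq_or_lt_of_le (norm_nonneg ((hfL2 f hdf).toLp _ : Lp ℝ 2 μ)) with h0 | h0
    · have hz : ⟪(hfL2 f hdf).toLp _, hx.toLp x⟫ = (0 : ℝ) := by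
        have h := hbd f hdf
        rw [← h0, zero_mul] at h
        exact abs_nonpos_iff.1 h
      rw [hz, zero_div]
      positivity
    · have h1 : ⟪(hfL2 f hdf).toLp _, hx.toLp x⟫ ≤
          ‖((hfL2 f hdf).toLp _ : Lp ℝ 2 μ)‖ * C := (le_abs_self _).trans (hbd f hdf)
      calc ⟪(hfL2 f hdf).toLp _, hx.toLp x⟫ /
            (‖((hfL2 f hdf).toLp _ : Lp ℝ 2 μ)‖ * Real.sqrt (∫ ω, x ω ^ 2 ∂μ))
          ≤ (‖((hfL2 f hdf).toLp _ : Lp ℝ 2 μ)‖ * C) /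
            (‖((hfL2 f hdf).toLp _ : Lp ℝ 2 μ)‖ * Real.sqrt (∫ ω, x ω ^ 2 ∂μ)) := by
            exact (div_le_div_iff_of_pos_right (mul_pos h0 hs2)).2 h1
        _ = C / Real.sqrt (∫ ω, x ω ^ 2 ∂μ) := mul_div_mul_left _ _ (ne_of_gt h0)
  -- Part (i)
  have part1 : ∀ u : P → ℝ, Summable (fun p => (u p) ^ 2) →
      (∀ α, HasSum (fun p => M p α * u p) (c α)) →
      Corr μ (fun ω => g (Z ω)) x D ≤
        Real.sqrt (∑' p, (u p) ^ 2) / Real.sqrt (∫ ω, x ω ^ 2 ∂μ) := by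
    intro u hu huc
    have hkey : ∀ (f : MvPolynomial (Fin N) ℝ) (hdf : f.totalDegree ≤ D),
        HasSum (fun p => ⟪(hfL2 f hdf).toLp _, ((hψL2 p).toLp _ : Lp ℝ 2 μ)⟫ * u p)
          ⟪(hfL2 f hdf).toLp _, hx.toLp x⟫ := by
      intro f hdf
      have h0 : ∀ v ∈ Submodule.span ℝ
          (Set.range fun α => ((hfL2 (φ α) (hφdeg α)).toLp _ : Lp ℝ 2 μ)),
          HasSum (fun p => ⟪v, ((hψL2 p).toLp _ : Lp ℝ 2 μ)⟫ * u p) ⟪v, hx.toLp x⟫ := by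
        intro v hv
        induction hv using Submodule.span_induction with
        | mem w hw =>
          obtain ⟨α, rfl⟩ := hw
          have h1 : ∀ p : P, ⟪((hfL2 (φ α) (hφdeg α)).toLp _ : Lp ℝ 2 μ),
              ((hψL2 p).toLp _ : Lp ℝ 2 μ)⟫ = M p α := hΦΨ α
          show HasSum (fun p => ⟪((hfL2 (φ α) (hφdeg α)).toLp _ : Lp ℝ 2 μ),
              ((hψL2 p).toLp _ : Lp ℝ 2 μ)⟫ * u p) ⟪((hfL2 (φ α) (hφdeg α)).toLp _ : Lp ℝ 2 μ), hx.toLp x⟫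
          rw [hΦX α]
          simp only [h1]
          exact huc α
        | zero => simpa using hasSum_zero
        | add a b ha hb iha ihb => simpa [inner_add_left, add_mul] using iha.add ihb
        | smul r v hv ih => simpa [real_inner_smul_left, mul_assoc] using ih.mul_left r
      exact h0 _ (hmemV f hdf)
    have hbessel : ∀ (f : MvPolynomial (Fin N) ℝ) (hdf : f.totalDegree ≤ D),
        Summable (fun p => ⟪(hfL2 f hdf).toLp _, ((hψL2 p).toLp _ : Lp ℝ 2 μ)⟫ ^ 2) := by
      intro f hdf
      have := hONfam.inner_products_summable ((hfL2 f hdf).toLp _)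
      have hco : ∀ p : P, ⟪((hψL2 p).toLp _ : Lp ℝ 2 μ), (hfL2 f hdf).toLp _⟫ =
          ⟪(hfL2 f hdf).toLp _, ((hψL2 p).toLp _ : Lp ℝ 2 μ)⟫ := fun p => real_inner_comm _ _
      simpa [Real.norm_eq_abs, sq_abs, hco] using this
    have hbd : ∀ (f : MvPolynomial (Fin N) ℝ) (hdf : f.totalDegree ≤ D),
        |⟪(hfL2 f hdf).toLp _, hx.toLp x⟫| ≤
          ‖((hfL2 f hdf).toLp _ : Lp ℝ 2 μ)‖ * Real.sqrt (∑' p, (u p) ^ 2) := by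
      intro f hdf
      have hb := tsum_abs_cs (hbessel f hdf) hu (hkey f hdf)
      refine hb.trans (mul_le_mul_of_nonneg_right ?_ (Real.sqrt_nonneg _))
      have hb2 : (∑' p, ⟪(hfL2 f hdf).toLp _, ((hψL2 p).toLp _ : Lp ℝ 2 μ)⟫ ^ 2)
          ≤ ‖((hfL2 f hdf).toLp _ : Lp ℝ 2 μ)‖ ^ 2 := by
        have := hONfam.tsum_inner_products_le ((hfL2 f hdf).toLp _)
        have hco : ∀ p : P, ⟪((hψL2 p).toLp _ : Lp ℝ 2 μ), (hfL2 f hdf).toLp _⟫ =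
            ⟪(hfL2 f hdf).toLp _, ((hψL2 p).toLp _ : Lp ℝ 2 μ)⟫ := fun p => real_inner_comm _ _
        simpa [Real.norm_eq_abs, sq_abs, hco] using this
      calc Real.sqrt (∑' p, ⟪(hfL2 f hdf).toLp _, ((hψL2 p).toLp _ : Lp ℝ 2 μ)⟫ ^ 2)
          ≤ Real.sqrt (‖((hfL2 f hdf).toLp _ : Lp ℝ 2 μ)‖ ^ 2) := Real.sqrt_le_sqrt hb2
        _ = _ := Real.sqrt_sq (norm_nonneg _)
    simp only [Corr]
    exact Real.sSup_le (hupper _ (Real.sqrt_nonneg _) hbd)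
      (div_nonneg (Real.sqrt_nonneg _) (Real.sqrt_nonneg _))
  refine ⟨part1, ?_⟩
  -- Part (ii)
  intro hcl
  -- the linear map from polynomials of degree ≤ D to L²
  let Lmap : MvPolynomial.restrictTotalDegree (Fin N) ℝ D →ₗ[ℝ] Lp ℝ 2 μ :=
    { toFun := fun f => (hfL2 f.1
        ((MvPolynomial.mem_restrictTotalDegree _ _ _).1 f.2)).toLp _
      map_add' := by
        intro f f'
        rw [← MemLp.toLp_add]
        refine MemLp.toLp_congr _ _ ?_
        exact Eventually.of_forall fun ω => by simp
      map_smul' := by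
        intro r f
        rw [RingHom.id_apply, ← MemLp.toLp_const_smul]
        exact MemLp.toLp_congr
          (hfL2 _ ((MvPolynomial.mem_restrictTotalDegree _ _ _).1 (r • f).2))
          ((hfL2 _ ((MvPolynomial.mem_restrictTotalDegree _ _ _).1 f.2)).const_smul r)
          (Eventually.of_forall fun ω => by simp [MvPolynomial.smul_eval]) }
  have hVle : Submodule.span ℝ
      (Set.range fun α => ((hfL2 (φ α) (hφdeg α)).toLp _ : Lp ℝ 2 μ)) ≤
      LinearMap.range Lmap := by
    rw [Submodule.span_le]
    rintro w ⟨α, rfl⟩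
    exact ⟨⟨φ α, (MvPolynomial.mem_restrictTotalDegree _ _ _).2 (hφdeg α)⟩, rfl⟩
  haveI hfinV : FiniteDimensional ℝ (Submodule.span ℝ
      (Set.range fun α => ((hfL2 (φ α) (hφdeg α)).toLp _ : Lp ℝ 2 μ))) :=
    Submodule.finiteDimensional_of_le hVle
  haveI : CompleteSpace (Submodule.span ℝ
      (Set.range fun α => ((hfL2 (φ α) (hφdeg α)).toLp _ : Lp ℝ 2 μ))) :=
    FiniteDimensional.complete ℝ _
  set V : Submodule ℝ (Lp ℝ 2 μ) := Submodule.span ℝ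
      (Set.range fun α => ((hfL2 (φ α) (hφdeg α)).toLp _ : Lp ℝ 2 μ)) with hVdef
  set xs : Lp ℝ 2 μ := (Submodule.orthogonalProjection V (hx.toLp x) : Lp ℝ 2 μ) with hxsdef
  have hxsV : xs ∈ V := SetLike.coe_mem _
  have horth : ∀ w ∈ V, ⟪w, hx.toLp x - xs⟫ = (0 : ℝ) := by
    intro w hw
    have h := Submodule.sub_starProjection_mem_orthogonal (K := V) (hx.toLp x)
    exact (Submodule.mem_orthogonal V _).1 h w hw
  have hwX : ∀ w ∈ V, ⟪w, hx.toLp x⟫ = ⟪w, xs⟫ := by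
    intro w hw
    have hX : hx.toLp x = xs + (hx.toLp x - xs) := (add_sub_cancel _ _).symm
    rw [hX, inner_add_right, horth w hw, add_zero]
  -- upper bound: every element of the Corr set is at most ‖xs‖/√(E x²)
  have hbdxs : ∀ (f : MvPolynomial (Fin N) ℝ) (hdf : f.totalDegree ≤ D),
      |⟪(hfL2 f hdf).toLp _, hx.toLp x⟫| ≤
        ‖((hfL2 f hdf).toLp _ : Lp ℝ 2 μ)‖ * ‖xs‖ := by
    intro f hdf
    rw [hwX _ (hmemV f hdf)]
    exact abs_real_inner_le_norm _ _
  have hub := hupper ‖xs‖ (norm_nonneg _) hbdxs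
  -- the optimal polynomial
  obtain ⟨f₀, hf₀⟩ := hVle hxsV
  have hdf₀ : (f₀ : MvPolynomial (Fin N) ℝ).totalDegree ≤ D :=
    (MvPolynomial.mem_restrictTotalDegree _ _ _).1 f₀.2
  have hW₀ : ((hfL2 (f₀ : MvPolynomial (Fin N) ℝ) hdf₀).toLp _ : Lp ℝ 2 μ) = xs := hf₀
  have hnum : (∫ ω, MvPolynomial.eval (g (Z ω)) (f₀ : MvPolynomial (Fin N) ℝ) * x ω ∂μ)
      = ‖xs‖ ^ 2 := by
    rw [← innerL2 _ _ (hfL2 _ hdf₀) hx, hW₀, hwX xs hxsV, real_inner_self_eq_norm_sq]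
  have hden : (∫ ω, (MvPolynomial.eval (g (Z ω)) (f₀ : MvPolynomial (Fin N) ℝ)) ^ 2 ∂μ)
      = ‖xs‖ ^ 2 := by
    rw [← hnorm _ hdf₀, hW₀]
  have ht₀val : ‖xs‖ ^ 2 / Real.sqrt (‖xs‖ ^ 2 * (∫ ω, x ω ^ 2 ∂μ))
      = ‖xs‖ / Real.sqrt (∫ ω, x ω ^ 2 ∂μ) := by
    rw [Real.sqrt_mul (sq_nonneg _), Real.sqrt_sq (norm_nonneg _)]
    rcases eq_or_lt_of_le (norm_nonneg xs) with h | h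
    · rw [← h]
      simp
    · rw [sq, mul_div_mul_left _ _ (ne_of_gt h)]
  -- Corr equals ‖xs‖ / √(E x²)
  have hCorr : Corr μ (fun ω => g (Z ω)) x D = ‖xs‖ / Real.sqrt (∫ ω, x ω ^ 2 ∂μ) := by
    apply le_antisymm
    · simp only [Corr]
      exact Real.sSup_le hub (div_nonneg (norm_nonneg _) (Real.sqrt_nonneg _))
    · simp only [Corr]
      refine le_csSup ⟨_, hub⟩ ?_
      exact ⟨f₀, hdf₀, by rw [hnum, hden, ht₀val]⟩
  -- the optimal dual certificate
  have hΨcl : ∀ q : Lp ℝ 2 μ, q ∈ V →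
      q ∈ closure ((Submodule.span ℝ
        (Set.range fun p => ((hψL2 p).toLp _ : Lp ℝ 2 μ)) : Submodule ℝ (Lp ℝ 2 μ)) :
          Set (Lp ℝ 2 μ)) := by
    intro q hq
    have hle : V ≤ (Submodule.span ℝ
        (Set.range fun p => ((hψL2 p).toLp _ : Lp ℝ 2 μ))).topologicalClosure := by
      rw [hVdef, Submodule.span_le]
      rintro w ⟨α, rfl⟩
      have hm := hcl (φ α) (hφdeg α)
      rwa [← Submodule.topologicalClosure_coe] at hm
    have h2 := hle hq
    rwa [← SetLike.mem_coe, Submodule.topologicalClosure_coe] at h2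
  set u : P → ℝ := fun p => ⟪((hψL2 p).toLp _ : Lp ℝ 2 μ), xs⟫ with hu
  have hps := hasSum_inner_of_mem_closure hONfam (hΨcl xs hxsV) (hΨcl xs hxsV)
  have hu2 : HasSum (fun p => u p ^ 2) (‖xs‖ ^ 2) := by
    have heq : ∀ p : P, u p ^ 2 =
        ⟪xs, ((hψL2 p).toLp _ : Lp ℝ 2 μ)⟫ * ⟪((hψL2 p).toLp _ : Lp ℝ 2 μ), xs⟫ := by
      intro p
      rw [hu, sq, real_inner_comm]
    rw [show (‖xs‖ ^ 2 : ℝ) = ⟪xs, xs⟫ from (real_inner_self_eq_norm_sq _).symm]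
    simpa only [heq] using hps
  have husum : Summable fun p => u p ^ 2 := hu2.summable
  have hufeas : ∀ α, HasSum (fun p => M p α * u p) (c α) := by
    intro α
    have hΦV : ((hfL2 (φ α) (hφdeg α)).toLp _ : Lp ℝ 2 μ) ∈ V :=
      Submodule.subset_span ⟨α, rfl⟩
    have h := hasSum_inner_of_mem_closure hONfam (hΨcl _ hΦV) (hΨcl xs hxsV)
    have hval : ⟪((hfL2 (φ α) (hφdeg α)).toLp _ : Lp ℝ 2 μ), xs⟫ = c α := by
      rw [← hwX _ hΦV, hΦX α]
    rw [hval] at h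
    simpa only [hΦΨ α] using h
  have htsum : Real.sqrt (∑' p, u p ^ 2) = ‖xs‖ := by
    rw [hu2.tsum_eq, Real.sqrt_sq (norm_nonneg _)]
  -- conclusion
  have hSmem : ‖xs‖ ∈ {t : ℝ | ∃ u : P → ℝ, Summable (fun p => (u p) ^ 2) ∧
      (∀ α, HasSum (fun p => M p α * u p) (c α)) ∧
      t = Real.sqrt (∑' p, (u p) ^ 2)} := ⟨u, husum, hufeas, htsum.symm⟩
  apply le_antisymm
  · rw [le_div_iff₀ hs2]
    refine le_csInf ⟨_, hSmem⟩ ?_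
    rintro t ⟨u', hu', huc', rfl⟩
    rw [← le_div_iff₀ hs2]
    exact part1 u' hu' huc'
  · rw [hCorr]
    refine (div_le_div_iff_of_pos_right hs2).2 (csInf_le ⟨0, ?_⟩ hSmem)
    rintro t ⟨u', -, -, rfl⟩
    exact Real.sqrt_nonneg _
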